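/- Let ⟨V, ≤⟩ be a pre-ordered vector space with an order unit e. Then for every p ∈ V, sup{r ∈ ℝ : p ≥ r·e} = inf{E(p) : E ∈ ℰ(V)} (as elements of ℝ ∪ {±∞}). Moreover, if the set ℰ(V) is nonempty, then there is a pseudo-expectation achieving the infimum, i.e., min{E(p) : E ∈ ℰ(V)} is well-defined. -/

import Mathlib

/-- **Theorem (zero-gap duality for pre-ordered vector spaces with order unit).**
For every `p ∈ V`, `sup{r ∈ ℝ : p ≥ r·e} = inf{E(p) : E ∈ ℰ(V)}` as elements of
`ℝ ∪ {±∞}`, and if `ℰ(V)` is nonempty the infimum is attained. -/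
theorem statement12 (V : Type*) [AddCommGroup V] [Module ℝ V]
    (le : V → V → Prop)
    (hrefl : ∀ v, le v v)
    (htrans : ∀ a b c, le a b → le b c → le a c)
    (hadd : ∀ p₁ q₁ p₂ q₂, le p₁ q₁ → le p₂ q₂ → le (p₁ + p₂) (q₁ + q₂))
    (hsmul : ∀ a : ℝ, 0 ≤ a → ∀ p q, le p q → le (a • p) (a • q))
    (e : V) (hunit : ∀ p : V, ∃ r : ℝ, 0 ≤ r ∧ le p (r • e))
    (p : V) :
    sSup ((fun r : ℝ => (r : EReal)) '' {r : ℝ | le (r • e) p})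
      = sInf ((fun E : V →ₗ[ℝ] ℝ => ((E p : ℝ) : EReal)) ''
          {E : V →ₗ[ℝ] ℝ | (∀ v : V, le 0 v → 0 ≤ E v) ∧ E e = 1}) ∧
    ({E : V →ₗ[ℝ] ℝ | (∀ v : V, le 0 v → 0 ≤ E v) ∧ E e = 1}.Nonempty →
      ∃ E ∈ {E : V →ₗ[ℝ] ℝ | (∀ v : V, le 0 v → 0 ≤ E v) ∧ E e = 1},
        ∀ E' ∈ {E : V →ₗ[ℝ] ℝ | (∀ v : V, le 0 v → 0 ≤ E v) ∧ E e = 1},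
          E p ≤ E' p) := by
  classical
  set S : Set ℝ := {r : ℝ | le (r • e) p} with hSdef
  set P : Set (V →ₗ[ℝ] ℝ) := {E : V →ₗ[ℝ] ℝ | (∀ v : V, le 0 v → 0 ≤ E v) ∧ E e = 1}
    with hPdef
  -- translation invariance
  have haddc : ∀ a b (c : V), le a b → le (a + c) (b + c) := fun a b c h =>
    hadd a b c c h (hrefl c)
  -- S is nonempty
  obtain ⟨r0, hr0nn, hr0⟩ := hunit (-p)
  have hr0S : (-r0) ∈ S := by
    have h1 := haddc (-p) (r0 • e) (p + (-r0) • e) hr0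
    have e1 : -p + (p + (-r0) • e) = (-r0) • e := by module
    have e2 : r0 • e + (p + (-r0) • e) = p := by module
    rw [e1, e2] at h1
    exact h1
  have hSne : S.Nonempty := ⟨-r0, hr0S⟩
  -- any pseudo-expectation dominates every element of S
  have hEge : ∀ E ∈ P, ∀ r ∈ S, r ≤ E p := by
    intro E hE r hr
    have h1 := haddc (r • e) p (-(r • e)) hr
    have e1 : r • e + -(r • e) = (0 : V) := by module
    rw [e1] at h1
    have h2 := hE.1 _ h1
    have h3 : E (p + -(r • e)) = E p - r * E e := by
      rw [map_add, map_neg, map_smul]; ring_nf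
    rw [h3, hE.2] at h2
    linarith
  by_cases hbdd : BddAbove S
  · -- bounded case
    set s : ℝ := sSup S with hs
    -- positivity of coefficients of e
    have hcpos : ∀ c : ℝ, le 0 (c • e) → 0 ≤ c := by
      intro c hc
      by_contra hneg
      push_neg at hneg
      obtain ⟨M, hM⟩ := hbdd
      have hMr0 : -r0 ≤ M := hM hr0S
      set a : ℝ := (M + r0 + 1) / (-c) with ha
      have hapos : 0 ≤ a := div_nonneg (by linarith) (by linarith)
      have h1 : le (a • (0 : V)) (a • (c • e)) := hsmul a hapos _ _ hc
      rw [smul_zero, smul_smul] at h1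
      have h2 := hadd _ _ _ _ h1 hr0S
      have e1 : (0 : V) + (-r0) • e = (-r0) • e := by module
      rw [e1] at h2
      have h3 := haddc _ _ (-((a * c) • e)) h2
      have e2 : (-r0) • e + -((a * c) • e) = (-r0 - a * c) • e := by module
      have e3 : (a * c) • e + p + -((a * c) • e) = p := by module
      rw [e2, e3] at h3
      have h4 : -r0 - a * c ≤ M := hM h3
      have hac : a * c = -(M + r0 + 1) := by
        rw [ha, div_mul_eq_mul_div, div_neg, mul_div_assoc, div_self hneg.ne]
        ring
      rw [hac] at h4
      linarith
    -- the sublinear functional N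
    set T : V → Set ℝ := fun v => {t : ℝ | le v (t • e)} with hT
    have hTne : ∀ v, (T v).Nonempty := by
      intro v; obtain ⟨t, _, ht⟩ := hunit v; exact ⟨t, ht⟩
    have hTbdd : ∀ v, BddBelow (T v) := by
      intro v
      obtain ⟨r1, _, h1⟩ := hunit (-v)
      refine ⟨-r1, fun t ht => ?_⟩
      have h2 := hadd _ _ _ _ ht h1
      have e1 : v + -v = (0 : V) := by module
      have e2 : t • e + r1 • e = (t + r1) • e := by module
      rw [e1, e2] at h2
      have := hcpos _ h2
      linarith
    set N : V → ℝ := fun v => sInf (T v) with hN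
    have hNle : ∀ v t, le v (t • e) → N v ≤ t := fun v t ht => csInf_le (hTbdd v) ht
    have hleN : ∀ v b, (∀ t ∈ T v, b ≤ t) → b ≤ N v := fun v b hb => le_csInf (hTne v) hb
    have hsmul' : ∀ c : ℝ, 0 < c → ∀ v t, le v (t • e) → le (c • v) ((c * t) • e) := by
      intro c hc v t ht
      have := hsmul c hc.le _ _ ht
      rwa [smul_smul] at this
    have N_hom : ∀ c : ℝ, 0 < c → ∀ v, N (c • v) = c * N v := by
      intro c hc v
      apply le_antisymm
      · have h1 : N (c • v) / c ≤ N v := by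
          apply hleN
          intro t ht
          have := hNle _ _ (hsmul' c hc v t ht)
          rw [div_le_iff₀ hc]
          linarith [mul_comm t c]
        calc N (c • v) = c * (N (c • v) / c) := by field_simp
          _ ≤ c * N v := by nlinarith
      · apply hleN
        intro t ht
        have h2 : le ((c⁻¹ * c) • v) ((c⁻¹ * t) • e) := by
          have := hsmul' c⁻¹ (by positivity) (c • v) t ht
          rwa [smul_smul] at this
        rw [inv_mul_cancel₀ hc.ne', one_smul] at h2
        have h3 := hNle _ _ h2
        have h4 := mul_le_mul_of_nonneg_left h3 hc.le
        rw [← mul_assoc, mul_inv_cancel₀ hc.ne', one_mul] at h4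
        exact h4
    have N_add : ∀ v w, N (v + w) ≤ N v + N w := by
      intro v w
      have key : ∀ t ∈ T v, ∀ t' ∈ T w, N (v + w) ≤ t + t' := by
        intro t ht t' ht'
        exact hNle _ _ (by
          have := hadd _ _ _ _ ht ht'
          have e1 : t • e + t' • e = (t + t') • e := by module
          rwa [e1] at this)
      have h1 : N (v + w) - N v ≤ N w := by
        apply hleN
        intro t' ht'
        have h2 : N (v + w) - t' ≤ N v := by
          apply hleN
          intro t ht
          linarith [key t ht t' ht']
        linarith
      linarith
    -- s ≤ N p
    have hsNp : s ≤ N p := by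
      apply csSup_le hSne
      intro r hr
      apply hleN
      intro t ht
      have h1 := htrans _ _ _ hr ht
      have h2 := haddc _ _ (-(r • e)) h1
      have e1 : r • e + -(r • e) = (0 : V) := by module
      have e2 : t • e + -(r • e) = (t - r) • e := by module
      rw [e1, e2] at h2
      linarith [hcpos _ h2]
    -- -s ≤ N (-p)
    have hnegT : ∀ t, le (-p) (t • e) → (-t) ∈ S := by
      intro t ht
      have h1 := haddc _ _ (p + (-t) • e) ht
      have e1 : -p + (p + (-t) • e) = (-t) • e := by module
      have e2 : t • e + (p + (-t) • e) = p := by module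
      rw [e1, e2] at h1
      exact h1
    have hsNnp : -s ≤ N (-p) := by
      apply hleN
      intro t ht
      have := le_csSup hbdd (hnegT t ht)
      linarith
    -- existence of a pseudo-expectation with value s at p
    have hexists : ∃ g : V →ₗ[ℝ] ℝ, (∀ v, le 0 v → 0 ≤ g v) ∧ g e = 1 ∧ g p = s := by
      have hposN : ∀ (g : V →ₗ[ℝ] ℝ), (∀ x, g x ≤ N x) →
          (∀ v, le 0 v → 0 ≤ g v) ∧ g e = 1 := by
        intro g hg
        constructor
        · intro v hv
          have h1 := haddc _ _ (-v) hv
          have e1 : (0 : V) + -v = -v := by module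
          have e2 : v + -v = ((0:ℝ)) • e := by module
          rw [e1, e2] at h1
          have h2 := (hg (-v)).trans (hNle _ _ h1)
          rw [map_neg] at h2
          linarith
        · have h1 : N e ≤ 1 := hNle _ _ (by rw [one_smul]; exact hrefl e)
          have h2 : N (-e) ≤ -1 := hNle _ _ (by
            have e1 : (-1 : ℝ) • e = -e := by module
            rw [e1]; exact hrefl (-e))
          have h3 := hg e
          have h4 := hg (-e)
          rw [map_neg] at h4
          linarith
      by_cases hp : p = 0
      · -- here s = 0
        have hs0 : s = 0 := by
          have h1 : (0 : ℝ) ∈ S := by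
            show le ((0:ℝ) • e) p
            rw [hp, zero_smul]; exact hrefl 0
          have h2 : s ≤ 0 := by
            apply csSup_le hSne
            intro r hr
            have h3 : le (r • e) 0 := by rw [← hp]; exact hr
            have h4 := haddc _ _ (-(r • e)) h3
            have e1 : r • e + -(r • e) = (0 : V) := by module
            have e2 : (0 : V) + -(r • e) = (-r) • e := by module
            rw [e1, e2] at h4
            have := hcpos _ h4
            linarith
          exact le_antisymm h2 (le_csSup hbdd h1)
        have he : e ≠ 0 := by
          intro he0
          obtain ⟨M, hM⟩ := hbdd
          have : (M + 1) ∈ S := by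
            show le ((M+1) • e) p
            rw [he0, smul_zero]
            have := hr0S
            show le ((0:V)) p
            have h5 : le ((-r0) • e) p := hr0S
            rwa [he0, smul_zero] at h5
          linarith [hM this]
        have hf : ∀ x : (LinearPMap.mkSpanSingleton (K := ℝ) e (1:ℝ) he : V →ₗ.[ℝ] ℝ).domain,
            (LinearPMap.mkSpanSingleton (K := ℝ) e (1:ℝ) he : V →ₗ.[ℝ] ℝ) x ≤ N x := by
          rintro ⟨x, hx⟩
          obtain ⟨c, rfl⟩ := Submodule.mem_span_singleton.1 hx
          rw [LinearPMap.mkSpanSingleton'_apply]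
          simp only [smul_eq_mul, mul_one, RingHom.id_apply]
          apply hleN
          intro t ht
          have h1 := haddc _ _ (-(c • e)) ht
          have e1 : c • e + -(c • e) = (0 : V) := by module
          have e2 : t • e + -(c • e) = (t - c) • e := by module
          rw [e1, e2] at h1
          linarith [hcpos _ h1]
        obtain ⟨g, hg1, hg2⟩ := exists_extension_of_le_sublinear
          (LinearPMap.mkSpanSingleton (K := ℝ) e (1:ℝ) he : V →ₗ.[ℝ] ℝ) N N_hom N_add hf
        refine ⟨g, (hposN g hg2).1, (hposN g hg2).2, ?_⟩
        rw [hp, map_zero, hs0]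
      · have hf : ∀ x : (LinearPMap.mkSpanSingleton (K := ℝ) p s hp : V →ₗ.[ℝ] ℝ).domain,
            (LinearPMap.mkSpanSingleton (K := ℝ) p s hp : V →ₗ.[ℝ] ℝ) x ≤ N x := by
          rintro ⟨x, hx⟩
          obtain ⟨c, rfl⟩ := Submodule.mem_span_singleton.1 hx
          rw [LinearPMap.mkSpanSingleton'_apply]
          simp only [smul_eq_mul, RingHom.id_apply]
          rcases lt_trichotomy c 0 with hc | hc | hc
          · have e1 : c • p = (-c) • (-p) := by module
            rw [e1, N_hom (-c) (by linarith)]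
            nlinarith [hsNnp]
          · subst hc
            rw [zero_mul, zero_smul]
            apply hleN
            intro t ht
            exact hcpos t ht
          · rw [N_hom c hc]
            nlinarith [hsNp]
        obtain ⟨g, hg1, hg2⟩ := exists_extension_of_le_sublinear
          (LinearPMap.mkSpanSingleton (K := ℝ) p s hp : V →ₗ.[ℝ] ℝ) N N_hom N_add hf
        refine ⟨g, (hposN g hg2).1, (hposN g hg2).2, ?_⟩
        have := hg1 ⟨p, Submodule.mem_span_singleton_self p⟩
        rwa [LinearPMap.mkSpanSingleton_apply] at this
    obtain ⟨g, hg_pos, hg_e, hg_p⟩ := hexists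
    have hgP : g ∈ P := ⟨hg_pos, hg_e⟩
    have hsle : ∀ E ∈ P, s ≤ E p := fun E hE => csSup_le hSne (fun r hr => hEge E hE r hr)
    constructor
    · -- sup = inf, both equal (s : EReal)
      have hL : sSup ((fun r : ℝ => (r : EReal)) '' S) = (s : EReal) := by
        apply le_antisymm
        · apply sSup_le
          rintro x ⟨r, hr, rfl⟩
          show (r : EReal) ≤ (s : EReal)
          exact_mod_cast le_csSup hbdd hr
        · by_contra hlt
          push_neg at hlt
          obtain ⟨x, hx1, hx2⟩ := EReal.lt_iff_exists_real_btwn.1 hlt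
          have hx2' : x < s := by exact_mod_cast hx2
          obtain ⟨r, hrS, hxr⟩ := exists_lt_of_lt_csSup hSne hx2'
          have h1 : (r : EReal) ≤ sSup ((fun r : ℝ => (r : EReal)) '' S) :=
            le_sSup ⟨r, hrS, rfl⟩
          have h2 : (x : EReal) < (r : EReal) := by exact_mod_cast hxr
          exact absurd (h2.trans_le h1) (not_lt.2 hx1.le)
      have hR : sInf ((fun E : V →ₗ[ℝ] ℝ => ((E p : ℝ) : EReal)) '' P) = (s : EReal) := by
        apply le_antisymm
        · exact sInf_le ⟨g, hgP, by show ((g p : ℝ) : EReal) = (s : EReal); rw [hg_p]⟩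
        · apply le_sInf
          rintro x ⟨E, hE, rfl⟩
          show (s : EReal) ≤ ((E p : ℝ) : EReal)
          exact_mod_cast hsle E hE
      rw [hL, hR]
    · intro _
      exact ⟨g, hgP, fun E' hE' => by rw [hg_p]; exact hsle E' hE'⟩
  · -- unbounded case: no pseudo-expectation exists
    have hPempty : P = ∅ := by
      rw [Set.eq_empty_iff_forall_notMem]
      intro E hE
      exact hbdd ⟨E p, fun r hr => hEge E hE r hr⟩
    constructor
    · rw [hPempty, Set.image_empty, sInf_empty]
      rw [sSup_eq_top]
      intro b hb
      obtain ⟨x, hx1, _⟩ := EReal.lt_iff_exists_real_btwn.1 hb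
      obtain ⟨r, hrS, hxr⟩ := (not_bddAbove_iff.1 hbdd) x
      refine ⟨(r : EReal), Set.mem_image_of_mem _ hrS, ?_⟩
      exact hx1.trans (by exact_mod_cast hxr)
    · intro hne
      rw [hPempty] at hne
      exact absurd hne Set.not_nonempty_empty
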